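/- Let G be a finite group, A and B distinct subgroups with A ≅ B ≅ AGL₂(3), G = ⟨A,B⟩, S ∈ Syl₃(A ∩ B), and N_G(Z(S)) ≤ A. Then A ∩ B = N_A(S) = N_B(S) = N_G(S). -/

import Mathlib

abbrev GL23 := Matrix.GeneralLinearGroup (Fin 2) (ZMod 3)
abbrev V23 := Multiplicative (Fin 2 → ZMod 3)

def glAddAut (g : GL23) : (Fin 2 → ZMod 3) ≃+ (Fin 2 → ZMod 3) where
  toFun v := (g : Matrix (Fin 2) (Fin 2) (ZMod 3)).mulVec v
  invFun v := ((g⁻¹ : GL23) : Matrix (Fin 2) (Fin 2) (ZMod 3)).mulVec v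
  left_inv v := by
    have hd : IsUnit ((g : Matrix (Fin 2) (Fin 2) (ZMod 3)).det) :=
      (Matrix.isUnit_iff_isUnit_det _).mp g.isUnit
    beta_reduce
    rw [Matrix.mulVec_mulVec, Units.inv_mul, Matrix.one_mulVec]
  right_inv v := by
    have hd : IsUnit ((g : Matrix (Fin 2) (Fin 2) (ZMod 3)).det) :=
      (Matrix.isUnit_iff_isUnit_det _).mp g.isUnit
    beta_reduce
    rw [Matrix.mulVec_mulVec, Units.mul_inv, Matrix.one_mulVec]
  map_add' x y := Matrix.mulVec_add _ x y

def aglPhi : GL23 →* MulAut V23 where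
  toFun g := AddEquiv.toMultiplicative (glAddAut g)
  map_one' := by
    ext v
    simp [glAddAut, AddEquiv.toMultiplicative]
  map_mul' g h := by
    ext v i
    simp [glAddAut, AddEquiv.toMultiplicative, Matrix.mulVec_mulVec] <;>
      fin_cases i <;> simp [Matrix.mul_apply, Fin.sum_univ_two] <;> ring

/-- The affine group `AGL₂(3) = (F₃)² ⋊ GL₂(3)`. -/
def AGL23 := SemidirectProduct V23 GL23 aglPhi

instance : Group AGL23 := SemidirectProduct.instGroup


/-- `S` is a Sylow 3-subgroup of the subgroup `K`: `S` is a 3-subgroup of `K`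
maximal among 3-subgroups of `K`. -/
def IsSylow3In {G : Type*} [Group G] (S K : Subgroup G) : Prop :=
  S ≤ K ∧ IsPGroup 3 ↥S ∧
    ∀ T : Subgroup G, IsPGroup 3 ↥T → T ≤ K → S ≤ T → T = S


namespace AGLproof
open Subgroup SemidirectProduct Pointwise

/-! ### Generic glue lemmas -/

section Glue
variable {G : Type*} [Group G]

theorem mem_centerMap_iff (K : Subgroup G) (x : G) :
    x ∈ Subgroup.map K.subtype (Subgroup.center ↥K) ↔ x ∈ K ∧ ∀ y ∈ K, y * x = x * y := by
  constructor
  · rintro ⟨⟨z, hzK⟩, hz, rfl⟩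
    refine ⟨hzK, fun y hy => ?_⟩
    exact congrArg Subtype.val (Subgroup.mem_center_iff.mp hz ⟨y, hy⟩)
  · rintro ⟨hxK, hcomm⟩
    exact ⟨⟨x, hxK⟩, Subgroup.mem_center_iff.mpr fun g => Subtype.ext (hcomm g g.2), rfl⟩

theorem normalizer_le_centerMap_normalizer (S : Subgroup G) :
    (Subgroup.normalizer (S : Set G)) ≤ (Subgroup.normalizer ((Subgroup.map S.subtype (Subgroup.center ↥S)) : Set G)) := by
  have key : ∀ g ∈ (Subgroup.normalizer (S : Set G)), ∀ x, x ∈ Subgroup.map S.subtype (Subgroup.center ↥S) →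
      g * x * g⁻¹ ∈ Subgroup.map S.subtype (Subgroup.center ↥S) := by
    intro g hg x hx
    rw [mem_centerMap_iff] at hx ⊢
    obtain ⟨hxS, hcomm⟩ := hx
    have hgS := Subgroup.mem_normalizer_iff.mp hg
    refine ⟨(hgS x).mp hxS, fun y hy => ?_⟩
    have hy' : g⁻¹ * y * g ∈ S := by
      have h3 : g * (g⁻¹ * y * g) * g⁻¹ = y := by group
      exact (hgS (g⁻¹ * y * g)).mpr (h3.symm ▸ hy)
    have h1 := hcomm _ hy'
    have h2 : g * ((g⁻¹ * y * g) * x) * g⁻¹ = g * (x * (g⁻¹ * y * g)) * g⁻¹ := by rw [h1]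
    calc y * (g * x * g⁻¹) = g * ((g⁻¹ * y * g) * x) * g⁻¹ := by group
    _ = g * (x * (g⁻¹ * y * g)) * g⁻¹ := h2
    _ = g * x * g⁻¹ * y := by group
  intro g hg
  rw [Subgroup.mem_normalizer_iff]
  intro x
  refine ⟨fun hx => key g hg x hx, fun hx => ?_⟩
  have := key g⁻¹ (inv_mem hg) _ hx
  simpa [mul_assoc] using this

theorem map_subtype_normalizer_subgroupOf {S T : Subgroup G} (hST : S ≤ T) :
    Subgroup.map T.subtype (Subgroup.normalizer ((S.subgroupOf T) : Set ↥T)) = T ⊓ (Subgroup.normalizer (S : Set G)) := by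
  ext x
  simp only [Subgroup.mem_map, Subgroup.mem_inf]
  constructor
  · rintro ⟨⟨t, htT⟩, ht, rfl⟩
    refine ⟨htT, ?_⟩
    have hn := Subgroup.mem_normalizer_iff.mp ht
    rw [Subgroup.mem_normalizer_iff]
    intro h
    constructor
    · intro hhS
      have := (hn ⟨h, hST hhS⟩).mp (by simpa [Subgroup.mem_subgroupOf] using hhS)
      simpa [Subgroup.mem_subgroupOf] using this
    · intro hconj
      have hhT : h ∈ T := by
        have h2 : h = t⁻¹ * (t * h * t⁻¹) * t := by group
        rw [h2]; exact mul_mem (mul_mem (inv_mem htT) (hST hconj)) htT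
      have := (hn ⟨h, hhT⟩).mpr (by simpa [Subgroup.mem_subgroupOf] using hconj)
      simpa [Subgroup.mem_subgroupOf] using this
  · rintro ⟨hxT, hxN⟩
    refine ⟨⟨x, hxT⟩, ?_, rfl⟩
    have hn := Subgroup.mem_normalizer_iff.mp hxN
    rw [Subgroup.mem_normalizer_iff]
    intro h
    simp only [Subgroup.mem_subgroupOf]
    exact hn h

theorem map_subtype_subgroupOf_self {S T : Subgroup G} (hST : S ≤ T) :
    Subgroup.map T.subtype (S.subgroupOf T) = S := by
  rw [Subgroup.subgroupOf_map_subtype, inf_eq_left.mpr hST]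

theorem map_subtype_top (T : Subgroup G) :
    Subgroup.map T.subtype (⊤ : Subgroup ↥T) = T := by
  ext x
  simp only [Subgroup.mem_map]
  exact ⟨fun ⟨y, _, hy⟩ => hy ▸ y.2, fun hx => ⟨⟨x, hx⟩, trivial, rfl⟩⟩

end Glue

/-! ### Concrete facts about `AGL23` -/

def u : GL23 := ⟨!![1,1;0,1], !![1,2;0,1], by decide, by decide⟩
def d : GL23 := ⟨!![1,0;0,2], !![1,0;0,2], by decide, by decide⟩
def s : GL23 := ⟨!![0,1;1,0], !![0,1;1,0], by decide, by decide⟩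

def U : Subgroup GL23 where
  carrier := {1, u, u * u}
  one_mem' := Or.inl rfl
  mul_mem' := by
    rintro a b (rfl|rfl|rfl) (rfl|rfl|rfl) <;>
      first
        | exact Or.inl (by ext : 1; decide)
        | exact Or.inr (Or.inl (by ext : 1; decide))
        | exact Or.inr (Or.inr (by ext : 1; decide))
  inv_mem' := by
    rintro a (rfl|rfl|rfl) <;>
      first
        | exact Or.inl (by ext : 1; decide)
        | exact Or.inr (Or.inl (by ext : 1; decide))
        | exact Or.inr (Or.inr (by ext : 1; decide))

abbrev pr : AGL23 →* GL23 := SemidirectProduct.rightHom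

def P0 : Subgroup AGL23 := U.comap pr

def prodEquiv : AGL23 ≃ V23 × GL23 where
  toFun x := (x.left, x.right)
  invFun p := ⟨p.1, p.2⟩
  left_inv _ := rfl
  right_inv _ := rfl

instance : Finite AGL23 := Finite.of_equiv _ prodEquiv.symm

def comapEquiv (W : Subgroup GL23) : ↥(W.comap pr) ≃ V23 × ↥W where
  toFun x := (x.1.left, ⟨x.1.right, x.2⟩)
  invFun p := ⟨⟨p.1, p.2.1⟩, p.2.2⟩
  left_inv _ := rfl
  right_inv _ := rfl

theorem card_V23 : Nat.card V23 = 9 := by rw [Nat.card_eq_fintype_card]; decide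

theorem card_AGL : Nat.card AGL23 = 432 := by
  rw [Nat.card_congr prodEquiv, Nat.card_prod, card_V23]
  rw [show Nat.card GL23 = 48 from by rw [Matrix.card_GL_field]; decide]

theorem card_U : Nat.card ↥U = 3 := by
  rw [show (↥U : Type) = ↥({1, u, u*u} : Set GL23) from rfl, Nat.card_coe_set_eq]
  rw [Set.ncard_insert_of_notMem (by decide), Set.ncard_insert_of_notMem (by decide),
    Set.ncard_singleton]

theorem card_P0 : Nat.card P0 = 27 := by
  rw [show P0 = U.comap pr from rfl, Nat.card_congr (comapEquiv U),
    Nat.card_prod, card_V23, card_U]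

instance : Fact (Nat.Prime 3) := ⟨by norm_num⟩

theorem pgroup_card_le {Q : Subgroup AGL23} (hQ : IsPGroup 3 ↥Q) : Nat.card Q ≤ 27 := by
  obtain ⟨n, hn⟩ := IsPGroup.iff_card.mp hQ
  have hdvd : Nat.card Q ∣ 432 := card_AGL ▸ Q.card_subgroup_dvd_card
  rw [hn] at hdvd ⊢
  by_contra hlt
  have h4 : 4 ≤ n := by
    by_contra h
    interval_cases n <;> omega
  have h5 : (3:ℕ) ^ 4 ∣ 3 ^ n := pow_dvd_pow 3 h4
  have : (81 : ℕ) ∣ 432 := dvd_trans (by norm_num) (dvd_trans h5 hdvd)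
  norm_num at this

theorem isPGroup_P0 : IsPGroup 3 P0 :=
  IsPGroup.of_card (n := 3) (by rw [card_P0]; norm_num)

def Psyl : Sylow 3 AGL23 where
  toSubgroup := P0
  isPGroup' := isPGroup_P0
  is_maximal' := by
    intro Q hQ hle
    exact ((Subgroup.eq_of_le_of_card_ge hle (by rw [card_P0]; exact pgroup_card_le hQ))).symm

theorem norm_P0 : (Subgroup.normalizer (P0 : Set AGL23)) = (Subgroup.normalizer (U : Set GL23)).comap pr :=
  (Subgroup.comap_normalizer_eq_of_surjective U rightHom_surjective).symm

theorem d_mem_normU : d ∈ (Subgroup.normalizer (U : Set GL23)) := by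
  have key : ∀ y : GL23, y ∈ U → d * y * d⁻¹ ∈ U := by
    rintro y (rfl|rfl|rfl)
    · exact Or.inl (by ext : 1; decide)
    · exact Or.inr (Or.inr (by ext : 1; decide))
    · exact Or.inr (Or.inl (by ext : 1; decide))
  have key2 : ∀ y : GL23, y ∈ U → d⁻¹ * y * d ∈ U := by
    rintro y (rfl|rfl|rfl)
    · exact Or.inl (by ext : 1; decide)
    · exact Or.inr (Or.inr (by ext : 1; decide))
    · exact Or.inr (Or.inl (by ext : 1; decide))
  rw [Subgroup.mem_normalizer_iff]
  intro h
  refine ⟨fun hh => key h hh, fun hh => ?_⟩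
  have h3 : d⁻¹ * (d * h * d⁻¹) * d = h := by group
  have := key2 _ hh
  rwa [h3] at this

theorem inr_d_mem_norm : (inr d : AGL23) ∈ (Subgroup.normalizer (P0 : Set AGL23)) := by
  rw [norm_P0]
  exact d_mem_normU

theorem inr_d_not_mem_P0 : (inr d : AGL23) ∉ P0 := by
  change d ∉ U
  rintro (h|h|h) <;> (have := congrArg Units.val h; revert this) <;> decide

theorem inr_s_not_mem_norm : (inr s : AGL23) ∉ (Subgroup.normalizer (P0 : Set AGL23)) := by
  rw [norm_P0]
  change s ∉ Subgroup.normalizer (U : Set GL23)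
  intro hs
  have := (Subgroup.mem_normalizer_iff.mp hs u).mp (Or.inr (Or.inl rfl))
  rcases this with h|h|h <;> (have := congrArg Units.val h; revert this) <;> decide

theorem card_norm_P0 : Nat.card (Subgroup.normalizer (P0 : Set AGL23)) = 108 := by
  have hP0le : P0 ≤ (Subgroup.normalizer (P0 : Set AGL23)) := Subgroup.le_normalizer
  obtain ⟨k, hk⟩ : (27:ℕ) ∣ Nat.card (Subgroup.normalizer (P0 : Set AGL23)) :=
    card_P0 ▸ Subgroup.card_dvd_of_le hP0le
  have hindex : Nat.card (Subgroup.normalizer (P0 : Set AGL23)) * (Subgroup.normalizer (P0 : Set AGL23)).index = 432 :=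
    card_AGL ▸ Subgroup.card_mul_index _
  have hmod : (Subgroup.normalizer (P0 : Set AGL23)).index % 3 = 1 % 3 := by
    have h1 := card_sylow_modEq_one 3 AGL23
    have h2 := Sylow.card_eq_index_normalizer Psyl
    have h3 : (Psyl : Subgroup AGL23) = P0 := rfl
    rw [h2] at h1
    exact h1
  have hne27 : Nat.card (Subgroup.normalizer (P0 : Set AGL23)) ≠ 27 := by
    intro h
    have heq : P0 = (Subgroup.normalizer (P0 : Set AGL23)) :=
      Subgroup.eq_of_le_of_card_ge hP0le (le_of_eq (by rw [card_P0, h]))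
    exact inr_d_not_mem_P0 (heq ▸ inr_d_mem_norm)
  have hne432 : Nat.card (Subgroup.normalizer (P0 : Set AGL23)) ≠ 432 := by
    intro h
    have heq : (Subgroup.normalizer (P0 : Set AGL23)) = ⊤ :=
      Subgroup.eq_top_of_card_eq (H := (Subgroup.normalizer (P0 : Set AGL23))) (h.trans card_AGL.symm)
    exact inr_s_not_mem_norm (heq ▸ Subgroup.mem_top _)
  set idx := (Subgroup.normalizer (P0 : Set AGL23)).index with hidx
  have hkidx : 27 * (k * idx) = 432 := by rw [← mul_assoc, ← hk]; exact hindex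
  have hk1 : k ≠ 1 := fun h => hne27 (by rw [hk, h, mul_one])
  have hk16' : k ≠ 16 := fun h => hne432 (by rw [hk, h])
  have hkidx' : k * idx = 16 := Nat.eq_of_mul_eq_mul_left (by norm_num) (hkidx.trans (by norm_num))
  have hk16 : k ≤ 16 := Nat.le_of_dvd (by norm_num) ⟨idx, hkidx'.symm⟩
  have hk0 : 0 < k :=
    Nat.pos_of_ne_zero (fun h => by rw [h, zero_mul] at hkidx'; omega)
  rw [hk]
  interval_cases k <;> omega

theorem smul_eq_map (a : MulAut AGL23) (K : Subgroup AGL23) :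
    a • K = Subgroup.map a.toMonoidHom K := rfl

theorem card_sylow_eq (P : Sylow 3 AGL23) : Nat.card (P : Subgroup AGL23) = 27 := by
  obtain ⟨g, hg⟩ := MulAction.exists_smul_eq AGL23 Psyl P
  have h : (P : Subgroup AGL23) = MulAut.conj g • P0 := by
    rw [← hg, Sylow.coe_subgroup_smul]; rfl
  rw [h, smul_eq_map,
    ← Nat.card_congr (Subgroup.equivMapOfInjective _ _ (MulAut.conj g).injective).toEquiv]
  exact card_P0

theorem card_sylow_normalizer (P : Sylow 3 AGL23) :
    Nat.card (Subgroup.normalizer ((P : Subgroup AGL23) : Set AGL23)) = 108 := by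
  obtain ⟨g, hg⟩ := MulAction.exists_smul_eq AGL23 Psyl P
  have h : (P : Subgroup AGL23) = MulAut.conj g • P0 := by
    rw [← hg, Sylow.coe_subgroup_smul]; rfl
  rw [h, smul_eq_map, ← Subgroup.map_equiv_normalizer_eq,
    ← Nat.card_congr (Subgroup.equivMapOfInjective _ _ (MulAut.conj g).injective).toEquiv]
  exact card_norm_P0

end AGLproof

/-- Theorem A setup: if `G = ⟨A,B⟩` is finite, `A ≠ B`, `A ≅ B ≅ AGL₂(3)`,
`S ∈ Syl₃(A ∩ B)` and `N_G(Z(S)) ≤ A`, then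
`A ∩ B = N_A(S) = N_B(S) = N_G(S)`. -/
theorem stmt14 {G : Type*} [Group G] [Finite G] (A B S : Subgroup G)
    (hAB : A ≠ B)
    (hA : Nonempty (↥A ≃* AGL23)) (hB : Nonempty (↥B ≃* AGL23))
    (hgen : A ⊔ B = ⊤)
    (hS : IsSylow3In S (A ⊓ B))
    (hNZ : Subgroup.normalizer ((Subgroup.map S.subtype (Subgroup.center ↥S) : Subgroup G) : Set G) ≤ A) :
    A ⊓ B = A ⊓ Subgroup.normalizer (S : Set G) ∧ A ⊓ B = B ⊓ Subgroup.normalizer (S : Set G) ∧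
      A ⊓ B = Subgroup.normalizer (S : Set G) := by
  classical
  obtain ⟨eA⟩ := hA
  obtain ⟨eB⟩ := hB
  obtain ⟨hSle, hSp, hSmax⟩ := hS
  have hSA : S ≤ A := hSle.trans inf_le_left
  have hSB : S ≤ B := hSle.trans inf_le_right
  have hNle : (Subgroup.normalizer (S : Set G)) ≤ A :=
    le_trans (AGLproof.normalizer_le_centerMap_normalizer S) hNZ
  haveI : Fact (Nat.Prime 3) := ⟨by norm_num⟩
  have cardA : Nat.card ↥A = 432 := (Nat.card_congr eA.toEquiv).trans AGLproof.card_AGL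
  have cardB : Nat.card ↥B = 432 := (Nat.card_congr eB.toEquiv).trans AGLproof.card_AGL
  -- S is a maximal 3-subgroup of B
  have maximalB : ∀ T : Subgroup G, IsPGroup 3 ↥T → T ≤ B → S ≤ T → T = S := by
    intro T hT hTB hST
    by_contra hne
    have hlt : S.subgroupOf T < ⊤ :=
      lt_of_le_of_ne le_top
        (fun h => hne (le_antisymm (Subgroup.subgroupOf_eq_top.mp h) hST))
    haveI hnil : Group.IsNilpotent ↥T := hT.isNilpotent
    have hlt2 : S.subgroupOf T < (Subgroup.normalizer ((S.subgroupOf T) : Set ↥T)) :=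
      normalizerCondition_of_isNilpotent _ hlt
    obtain ⟨x, hxN, hxS⟩ := SetLike.exists_of_lt hlt2
    set Q := Subgroup.map T.subtype (Subgroup.normalizer ((S.subgroupOf T) : Set ↥T)) with hQ
    have hQT : Q ≤ T := Subgroup.map_subtype_le _
    have hQ3 : IsPGroup 3 ↥Q := hT.to_le hQT
    have hQN : Q ≤ (Subgroup.normalizer (S : Set G)) := by
      rw [hQ, AGLproof.map_subtype_normalizer_subgroupOf hST]
      exact inf_le_right
    have hSQ : S ≤ Q := by
      conv_lhs => rw [← AGLproof.map_subtype_subgroupOf_self hST]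
      exact Subgroup.map_le_map_iff_of_injective (Subgroup.subtype_injective T) |>.mpr
        Subgroup.le_normalizer
    have hQS : Q = S := hSmax Q hQ3 (le_inf (hQN.trans hNle) (hQT.trans hTB)) hSQ
    apply hxS
    have hxQ : (x : G) ∈ Q := ⟨x, hxN, rfl⟩
    rw [hQS] at hxQ
    exact hxQ
  -- the Sylow subgroup of AGL23 coming from `S ≤ B`
  have hSpB : IsPGroup 3 ↥(S.subgroupOf B) :=
    hSp.of_equiv (Subgroup.subgroupOfEquivOfLe hSB).symm
  have hSpAGL : IsPGroup 3 ↥(Subgroup.map eB.toMonoidHom (S.subgroupOf B)) :=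
    hSpB.of_equiv ((S.subgroupOf B).equivMapOfInjective eB.toMonoidHom eB.injective)
  have symm_map : ∀ (X : Subgroup ↥B),
      Subgroup.map eB.symm.toMonoidHom (Subgroup.map eB.toMonoidHom X) = X := by
    intro X
    rw [Subgroup.map_map]
    have : (eB.symm.toMonoidHom.comp eB.toMonoidHom) = MonoidHom.id ↥B := by
      ext z; simp
    rw [this, Subgroup.map_id]
  have map_symm_map : ∀ (Y : Subgroup AGL23),
      Subgroup.map eB.toMonoidHom (Subgroup.map eB.symm.toMonoidHom Y) = Y := by
    intro Y
    rw [Subgroup.map_map]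
    have : (eB.toMonoidHom.comp eB.symm.toMonoidHom) = MonoidHom.id AGL23 := by
      ext z; simp
    rw [this, Subgroup.map_id]
  let PB : Sylow 3 AGL23 :=
    { toSubgroup := Subgroup.map eB.toMonoidHom (S.subgroupOf B)
      isPGroup' := hSpAGL
      is_maximal' := by
        intro Q hQ hle
        have hR3 : IsPGroup 3
            ↥(Subgroup.map B.subtype (Subgroup.map eB.symm.toMonoidHom Q)) := by
          have h1 : IsPGroup 3 ↥(Subgroup.map eB.symm.toMonoidHom Q) :=
            hQ.of_equiv (Q.equivMapOfInjective eB.symm.toMonoidHom eB.symm.injective)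
          exact h1.of_equiv ((Subgroup.map eB.symm.toMonoidHom Q).equivMapOfInjective
            B.subtype (Subgroup.subtype_injective B))
        have hRB : Subgroup.map B.subtype (Subgroup.map eB.symm.toMonoidHom Q) ≤ B :=
          Subgroup.map_subtype_le _
        have hSR : S ≤ Subgroup.map B.subtype (Subgroup.map eB.symm.toMonoidHom Q) := by
          conv_lhs => rw [← AGLproof.map_subtype_subgroupOf_self hSB]
          apply Subgroup.map_le_map_iff_of_injective (Subgroup.subtype_injective B) |>.mpr
          have := Subgroup.map_le_map_iff_of_injective
            (f := eB.symm.toMonoidHom) eB.symm.injective |>.mpr hle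
          rwa [symm_map] at this
        have hRS := maximalB _ hR3 hRB hSR
        have : Subgroup.map eB.symm.toMonoidHom Q = S.subgroupOf B := by
          apply Subgroup.map_injective (Subgroup.subtype_injective B)
          rw [hRS, AGLproof.map_subtype_subgroupOf_self hSB]
        have h2 := congrArg (Subgroup.map eB.toMonoidHom) this
        rwa [map_symm_map] at h2 }
  have cardS : Nat.card ↥S = 27 := by
    have h1 : Nat.card ↥S = Nat.card ↥(S.subgroupOf B) :=
      Nat.card_congr (Subgroup.subgroupOfEquivOfLe hSB).symm.toEquiv
    have h2 : Nat.card ↥(S.subgroupOf B) =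
        Nat.card ↥(Subgroup.map eB.toMonoidHom (S.subgroupOf B)) :=
      Nat.card_congr ((S.subgroupOf B).equivMapOfInjective eB.toMonoidHom eB.injective).toEquiv
    rw [h1, h2]
    exact AGLproof.card_sylow_eq PB
  -- card of B ⊓ N
  have cardBN : Nat.card ↥(B ⊓ (Subgroup.normalizer (S : Set G))) = 108 := by
    have h0 : Subgroup.map eB.toMonoidHom (Subgroup.normalizer ((S.subgroupOf B) : Set ↥B)) =
        (Subgroup.normalizer ((Subgroup.map eB.toMonoidHom (S.subgroupOf B)) : Set AGL23)) :=
      Subgroup.map_equiv_normalizer_eq (S.subgroupOf B) eB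
    have h1 : Nat.card ↥((Subgroup.normalizer ((S.subgroupOf B) : Set ↥B))) = 108 := by
      have := AGLproof.card_sylow_normalizer PB
      have h2 : Nat.card ↥((Subgroup.normalizer ((S.subgroupOf B) : Set ↥B))) =
          Nat.card ↥(Subgroup.map eB.toMonoidHom (Subgroup.normalizer ((S.subgroupOf B) : Set ↥B))) :=
        Nat.card_congr (((Subgroup.normalizer ((S.subgroupOf B) : Set ↥B))).equivMapOfInjective
          eB.toMonoidHom eB.injective).toEquiv
      rw [h2, h0]
      exact this
    rw [← AGLproof.map_subtype_normalizer_subgroupOf hSB,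
      ← Nat.card_congr (((Subgroup.normalizer ((S.subgroupOf B) : Set ↥B))).equivMapOfInjective
        B.subtype (Subgroup.subtype_injective B)).toEquiv]
    exact h1
  -- the Sylow subgroup of AGL23 coming from `S ≤ A`
  have hSpA : IsPGroup 3 ↥(S.subgroupOf A) :=
    hSp.of_equiv (Subgroup.subgroupOfEquivOfLe hSA).symm
  have hSpAGLA : IsPGroup 3 ↥(Subgroup.map eA.toMonoidHom (S.subgroupOf A)) :=
    hSpA.of_equiv ((S.subgroupOf A).equivMapOfInjective eA.toMonoidHom eA.injective)
  have cardPA : Nat.card ↥(Subgroup.map eA.toMonoidHom (S.subgroupOf A)) = 27 := by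
    have h1 : Nat.card ↥S = Nat.card ↥(S.subgroupOf A) :=
      Nat.card_congr (Subgroup.subgroupOfEquivOfLe hSA).symm.toEquiv
    have h2 : Nat.card ↥(S.subgroupOf A) =
        Nat.card ↥(Subgroup.map eA.toMonoidHom (S.subgroupOf A)) :=
      Nat.card_congr ((S.subgroupOf A).equivMapOfInjective eA.toMonoidHom eA.injective).toEquiv
    rw [← h2, ← h1, cardS]
  let PA : Sylow 3 AGL23 :=
    { toSubgroup := Subgroup.map eA.toMonoidHom (S.subgroupOf A)
      isPGroup' := hSpAGLA
      is_maximal' := by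
        intro Q hQ hle
        exact (Subgroup.eq_of_le_of_card_ge hle
          (by rw [cardPA]; exact AGLproof.pgroup_card_le hQ)).symm }
  -- card of N = A ⊓ N
  have cardN : Nat.card ↥(Subgroup.normalizer (S : Set G)) = 108 := by
    have hAN : A ⊓ (Subgroup.normalizer (S : Set G)) = (Subgroup.normalizer (S : Set G)) := inf_eq_right.mpr hNle
    have h0 : Subgroup.map eA.toMonoidHom (Subgroup.normalizer ((S.subgroupOf A) : Set ↥A)) =
        (Subgroup.normalizer ((Subgroup.map eA.toMonoidHom (S.subgroupOf A)) : Set AGL23)) :=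
      Subgroup.map_equiv_normalizer_eq (S.subgroupOf A) eA
    have h1 : Nat.card ↥((Subgroup.normalizer ((S.subgroupOf A) : Set ↥A))) = 108 := by
      have := AGLproof.card_sylow_normalizer PA
      have h2 : Nat.card ↥((Subgroup.normalizer ((S.subgroupOf A) : Set ↥A))) =
          Nat.card ↥(Subgroup.map eA.toMonoidHom (Subgroup.normalizer ((S.subgroupOf A) : Set ↥A))) :=
        Nat.card_congr (((Subgroup.normalizer ((S.subgroupOf A) : Set ↥A))).equivMapOfInjective
          eA.toMonoidHom eA.injective).toEquiv
      rw [h2, h0]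
      exact this
    rw [← hAN, ← AGLproof.map_subtype_normalizer_subgroupOf hSA,
      ← Nat.card_congr (((Subgroup.normalizer ((S.subgroupOf A) : Set ↥A))).equivMapOfInjective
        A.subtype (Subgroup.subtype_injective A)).toEquiv]
    exact h1
  -- Sylow subgroup of X = A ⊓ B
  set X := A ⊓ B with hX
  have hSleX : S ≤ X := hSle
  have hSpX : IsPGroup 3 ↥(S.subgroupOf X) :=
    hSp.of_equiv (Subgroup.subgroupOfEquivOfLe hSleX).symm
  let SX : Sylow 3 ↥X :=
    { toSubgroup := S.subgroupOf X
      isPGroup' := hSpX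
      is_maximal' := by
        intro Q hQ hle
        have hQ3 : IsPGroup 3 ↥(Subgroup.map X.subtype Q) :=
          hQ.of_equiv (Q.equivMapOfInjective X.subtype (Subgroup.subtype_injective X))
        have hQle : Subgroup.map X.subtype Q ≤ X := Subgroup.map_subtype_le _
        have hSQ : S ≤ Subgroup.map X.subtype Q := by
          conv_lhs => rw [← AGLproof.map_subtype_subgroupOf_self hSleX]
          exact Subgroup.map_le_map_iff_of_injective
            (Subgroup.subtype_injective X) |>.mpr hle
        have := hSmax _ hQ3 hQle hSQ
        apply Subgroup.map_injective (Subgroup.subtype_injective X)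
        rw [this, AGLproof.map_subtype_subgroupOf_self hSleX] }
  -- the normalizer of S in X is B ⊓ N
  have hXN : X ⊓ (Subgroup.normalizer (S : Set G)) = B ⊓ (Subgroup.normalizer (S : Set G)) := by
    apply le_antisymm
    · exact inf_le_inf_right _ inf_le_right
    · refine le_inf ?_ inf_le_right
      rw [hX]
      exact le_inf (inf_le_right.trans hNle) inf_le_left
  have hmapNX : Subgroup.map X.subtype (Subgroup.normalizer ((S.subgroupOf X) : Set ↥X)) = B ⊓ (Subgroup.normalizer (S : Set G)) := by
    rw [AGLproof.map_subtype_normalizer_subgroupOf hSleX, hXN]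
  have cardNX : Nat.card ↥((Subgroup.normalizer ((S.subgroupOf X) : Set ↥X))) = 108 := by
    rw [← cardBN, ← hmapNX]
    exact Nat.card_congr (((Subgroup.normalizer ((S.subgroupOf X) : Set ↥X))).equivMapOfInjective
      X.subtype (Subgroup.subtype_injective X)).toEquiv
  -- Sylow counting in X
  have hmodX : Nat.card (Sylow 3 ↥X) % 3 = 1 % 3 := card_sylow_modEq_one 3 ↥X
  have hidxX : Nat.card (Sylow 3 ↥X) = (Subgroup.normalizer ((S.subgroupOf X) : Set ↥X)).index := by
    have := Sylow.card_eq_index_normalizer SX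
    exact this
  have hcardX : 108 * Nat.card (Sylow 3 ↥X) = Nat.card ↥X := by
    rw [hidxX, ← cardNX]
    exact Subgroup.card_mul_index _
  have hXdvd : Nat.card ↥X ∣ 432 := cardB ▸ Subgroup.card_dvd_of_le inf_le_right
  set n := Nat.card (Sylow 3 ↥X) with hn
  have hndvd : n ∣ 4 := by
    obtain ⟨c, hc⟩ := hXdvd
    refine ⟨c, ?_⟩
    have h1 : 108 * (n * c) = 108 * 4 := by
      rw [← mul_assoc, hcardX, ← hc]
    exact (Nat.eq_of_mul_eq_mul_left (show 0 < 108 by norm_num) h1).symm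
  have hn14 : n = 1 ∨ n = 4 := by
    have hle4 : n ≤ 4 := Nat.le_of_dvd (by norm_num) hndvd
    interval_cases n <;> omega
  have hn1 : n = 1 := by
    rcases hn14 with h | h
    · exact h
    · exfalso
      have hcX : Nat.card ↥X = 432 := by rw [← hcardX, h]
      have hXB : X = B :=
        Subgroup.eq_of_le_of_card_ge inf_le_right (le_of_eq (by rw [cardB, hcX]))
      have hBA : B ≤ A := hXB ▸ inf_le_left
      exact hAB (Subgroup.eq_of_le_of_card_ge hBA (le_of_eq (by rw [cardA, cardB]))).symm
  -- conclude : X = B ⊓ N = N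
  have hnormtop : (Subgroup.normalizer ((S.subgroupOf X) : Set ↥X)) = ⊤ := by
    apply Subgroup.index_eq_one.mp
    rw [← hidxX]
    exact hn1
  have hXeq : X = B ⊓ (Subgroup.normalizer (S : Set G)) := by
    rw [← hmapNX, hnormtop, AGLproof.map_subtype_top]
  have hXleN : X ≤ (Subgroup.normalizer (S : Set G)) := hXeq ▸ inf_le_right
  have hXN' : X = (Subgroup.normalizer (S : Set G)) := by
    apply Subgroup.eq_of_le_of_card_ge hXleN
    rw [cardN, hXeq, cardBN]
  refine ⟨?_, ?_, hXN'⟩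
  · rw [← hXN', inf_eq_right.mpr (inf_le_left : X ≤ A)]
  · rw [← hXN', inf_eq_right.mpr (inf_le_right : X ≤ B)]
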